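/- arXiv:2408.08081 — 2 statements merged into one kernel-verified Lean document; each statement's English description precedes it below -/
import Mathlib

section
/- Let n ≥ 1 and let G be a group of invertible affine transformations of ℝⁿ such that (i) the set of vectors v for which the translation x ↦ x + v belongs to G is dense in ℝⁿ, and (ii) G contains an element whose linear part has operator norm strictly less than 1. Then for any two nonempty polytopes P and Q in ℝⁿ there are finitely many polytopes P₁, …, P_k whose union is P and whose pairwise intersections are Lebesgue-null, together with elements g₁, …, g_k ∈ G, such that gᵢ(Pᵢ) ⊆ Q for each i, gᵢ(Pᵢ) ∩ gⱼ(Pⱼ) is Lebesgue-null for all i ≠ j, and vol(⋃ᵢ gᵢ(Pᵢ)) < vol(Q) (so the complement in Q of the embedded copy of P has positive Lebesgue measure). -/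
open MeasureTheory

/-- A polytope in `ℝⁿ`: a finite union of `n`-simplices, where an `n`-simplex is the convex
hull of `n + 1` affinely independent points. -/
def IsEuclideanPolytope (n : ℕ) (P : Set (EuclideanSpace ℝ (Fin n))) : Prop :=
  ∃ (k : ℕ) (v : Fin k → Fin (n + 1) → EuclideanSpace ℝ (Fin n)),
    (∀ i, AffineIndependent ℝ (v i)) ∧ P = ⋃ i, convexHull ℝ (Set.range (v i))

section Aux

variable {n : ℕ}

/-- A nonempty polytope contains a metric ball of positive radius. -/
lemma polytope_exists_ball (n : ℕ) (hn : 1 ≤ n) (Q : Set (EuclideanSpace ℝ (Fin n)))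
    (hQ : IsEuclideanPolytope n Q) (hQne : Q.Nonempty) :
    ∃ (q : EuclideanSpace ℝ (Fin n)) (r : ℝ), 0 < r ∧ Metric.ball q r ⊆ Q := by
  obtain ⟨k, v, hindep, rfl⟩ := hQ
  obtain ⟨x, hx⟩ := hQne
  obtain ⟨i, hi⟩ := Set.mem_iUnion.1 hx
  have hconv : Convex ℝ (convexHull ℝ (Set.range (v i))) := convex_convexHull ℝ _
  have hspan : affineSpan ℝ (Set.range (v i)) = ⊤ := by
    rw [(hindep i).affineSpan_eq_top_iff_card_eq_finrank_add_one]
    simp [finrank_euclideanSpace_fin]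
  have hspan' : affineSpan ℝ (convexHull ℝ (Set.range (v i))) = ⊤ := by
    rw [affineSpan_convexHull]; exact hspan
  have hint : (interior (convexHull ℝ (Set.range (v i)))).Nonempty :=
    hconv.interior_nonempty_iff_affineSpan_eq_top.2 hspan'
  obtain ⟨q, hq⟩ := hint
  obtain ⟨r, hr, hball⟩ := Metric.isOpen_iff.1 isOpen_interior q hq
  refine ⟨q, r, hr, hball.trans (interior_subset.trans ?_)⟩
  exact Set.subset_iUnion (fun j => convexHull ℝ (Set.range (v j))) i

/-- A polytope is bounded. -/
lemma polytope_isBounded {P : Set (EuclideanSpace ℝ (Fin n))}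
    (hP : IsEuclideanPolytope n P) : Bornology.IsBounded P := by
  obtain ⟨k, v, _, rfl⟩ := hP
  exact Bornology.isBounded_iUnion.2 fun i => isBounded_convexHull.2 (Set.finite_range _).isBounded

end Aux

/-- Let `G` be a group of invertible affine transformations of `ℝⁿ` such that the set of
translation vectors of translations in `G` is dense, and such that `G` contains an element
whose linear part has operator norm `< 1`.  Then any nonempty polytope `P` admits a scissors
embedding into any nonempty polytope `Q` whose image has measure strictly smaller than that
of `Q`. -/
theorem squeezing_scissors_embedding (n : ℕ) (hn : 1 ≤ n)
    (G : Subgroup (EuclideanSpace ℝ (Fin n) ≃ᵃ[ℝ] EuclideanSpace ℝ (Fin n)))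
    (hdense : Dense {v : EuclideanSpace ℝ (Fin n) |
      AffineEquiv.constVAdd ℝ (EuclideanSpace ℝ (Fin n)) v ∈ G})
    (hshrink : ∃ g ∈ G,
      ‖LinearMap.toContinuousLinearMap
        ((g : EuclideanSpace ℝ (Fin n) ≃ᵃ[ℝ] EuclideanSpace ℝ (Fin n)).linear :
          EuclideanSpace ℝ (Fin n) →ₗ[ℝ] EuclideanSpace ℝ (Fin n))‖ < 1)
    (P Q : Set (EuclideanSpace ℝ (Fin n)))
    (hP : IsEuclideanPolytope n P) (hQ : IsEuclideanPolytope n Q)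
    (hPne : P.Nonempty) (hQne : Q.Nonempty) :
    ∃ (k : ℕ) (Ps : Fin k → Set (EuclideanSpace ℝ (Fin n)))
      (g : Fin k → (EuclideanSpace ℝ (Fin n) ≃ᵃ[ℝ] EuclideanSpace ℝ (Fin n))),
      (∀ i, g i ∈ G) ∧
      (∀ i, IsEuclideanPolytope n (Ps i)) ∧
      (⋃ i, Ps i) = P ∧
      (∀ i j, i ≠ j → volume (Ps i ∩ Ps j) = 0) ∧
      (∀ i, (g i) '' (Ps i) ⊆ Q) ∧
      (∀ i j, i ≠ j → volume ((g i) '' (Ps i) ∩ (g j) '' (Ps j)) = 0) ∧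
      volume (⋃ i, (g i) '' (Ps i)) < volume Q := by
  classical
  haveI : Nontrivial (EuclideanSpace ℝ (Fin n)) :=
    Module.nontrivial_of_finrank_pos (R := ℝ)
      (by rw [finrank_euclideanSpace_fin]; omega)
  -- a ball inside Q
  obtain ⟨q, r, hr, hballQ⟩ := polytope_exists_ball n hn Q hQ hQne
  -- P is bounded
  obtain ⟨R, hR0, hPR⟩ :=
    (polytope_isBounded hP).subset_closedBall_lt 0 (0 : EuclideanSpace ℝ (Fin n))
  obtain ⟨x₀, hx₀⟩ := hPne
  -- the shrinking element
  obtain ⟨g₀, hg₀G, hg₀⟩ := hshrink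
  set c : ℝ := ‖LinearMap.toContinuousLinearMap
      ((g₀ : EuclideanSpace ℝ (Fin n) ≃ᵃ[ℝ] EuclideanSpace ℝ (Fin n)).linear :
        EuclideanSpace ℝ (Fin n) →ₗ[ℝ] EuclideanSpace ℝ (Fin n))‖ with hc
  have hc0 : 0 ≤ c := norm_nonneg _
  -- single application contracts distances by c
  have hstep : ∀ x y : EuclideanSpace ℝ (Fin n),
      dist ((g₀ : EuclideanSpace ℝ (Fin n) ≃ᵃ[ℝ] EuclideanSpace ℝ (Fin n)) x)
        ((g₀ : EuclideanSpace ℝ (Fin n) ≃ᵃ[ℝ] EuclideanSpace ℝ (Fin n)) y) ≤ c * dist x y := by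
    intro x y
    have h1 := AffineMap.linearMap_vsub
      ((g₀ : EuclideanSpace ℝ (Fin n) ≃ᵃ[ℝ] EuclideanSpace ℝ (Fin n)) :
        EuclideanSpace ℝ (Fin n) →ᵃ[ℝ] EuclideanSpace ℝ (Fin n)) x y
    simp only [vsub_eq_sub, AffineEquiv.coe_toAffineMap] at h1
    rw [dist_eq_norm, dist_eq_norm, ← h1]
    calc ‖(g₀ : EuclideanSpace ℝ (Fin n) ≃ᵃ[ℝ] EuclideanSpace ℝ (Fin n)).linear (x - y)‖
        = ‖LinearMap.toContinuousLinearMap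
            ((g₀ : EuclideanSpace ℝ (Fin n) ≃ᵃ[ℝ] EuclideanSpace ℝ (Fin n)).linear :
              EuclideanSpace ℝ (Fin n) →ₗ[ℝ] EuclideanSpace ℝ (Fin n)) (x - y)‖ := rfl
      _ ≤ c * ‖x - y‖ := ContinuousLinearMap.le_opNorm _ _
  -- powers contract by c^m
  have hpow : ∀ (m : ℕ) (x y : EuclideanSpace ℝ (Fin n)),
      dist (((g₀ : EuclideanSpace ℝ (Fin n) ≃ᵃ[ℝ] EuclideanSpace ℝ (Fin n)) ^ m) x)
        (((g₀ : EuclideanSpace ℝ (Fin n) ≃ᵃ[ℝ] EuclideanSpace ℝ (Fin n)) ^ m) y)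
        ≤ c ^ m * dist x y := by
    intro m
    induction m with
    | zero => intro x y; simp [AffineEquiv.one_def]
    | succ m ih =>
      intro x y
      have happ : ∀ z, (((g₀ : EuclideanSpace ℝ (Fin n) ≃ᵃ[ℝ]
          EuclideanSpace ℝ (Fin n)) ^ (m + 1)) z)
          = ((g₀ : EuclideanSpace ℝ (Fin n) ≃ᵃ[ℝ] EuclideanSpace ℝ (Fin n)) ^ m)
            ((g₀ : EuclideanSpace ℝ (Fin n) ≃ᵃ[ℝ] EuclideanSpace ℝ (Fin n)) z) := by
        intro z; rw [pow_succ]; rfl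
      rw [happ x, happ y]
      calc dist _ _ ≤ c ^ m * dist ((g₀ : EuclideanSpace ℝ (Fin n) ≃ᵃ[ℝ]
              EuclideanSpace ℝ (Fin n)) x)
              ((g₀ : EuclideanSpace ℝ (Fin n) ≃ᵃ[ℝ] EuclideanSpace ℝ (Fin n)) y) := ih _ _
        _ ≤ c ^ m * (c * dist x y) :=
            mul_le_mul_of_nonneg_left (hstep x y) (pow_nonneg hc0 m)
        _ = c ^ (m + 1) * dist x y := by ring
  -- pick m so that the image of P has diameter ≤ r/4 from the image of x₀
  have h2R : (0 : ℝ) < 2 * R + 1 := by linarith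
  obtain ⟨m, hm⟩ := exists_pow_lt_of_lt_one (x := r / 4 / (2 * R + 1)) (y := c)
    (by positivity) hg₀
  set h : EuclideanSpace ℝ (Fin n) ≃ᵃ[ℝ] EuclideanSpace ℝ (Fin n) :=
    (g₀ : EuclideanSpace ℝ (Fin n) ≃ᵃ[ℝ] EuclideanSpace ℝ (Fin n)) ^ m with hh
  have hhG : h ∈ G := pow_mem hg₀G m
  have hsmall : ∀ x ∈ P, dist (h x) (h x₀) ≤ r / 4 := by
    intro x hx
    have hd : dist x x₀ ≤ 2 * R + 1 := by
      have h1 := hPR hx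
      have h2 := hPR hx₀
      rw [Metric.mem_closedBall] at h1 h2
      calc dist x x₀ ≤ dist x 0 + dist 0 x₀ := dist_triangle _ _ _
        _ ≤ R + R := by rw [dist_comm (0 : EuclideanSpace ℝ (Fin n)) x₀]; exact add_le_add h1 h2
        _ ≤ 2 * R + 1 := by linarith
    calc dist (h x) (h x₀) ≤ c ^ m * dist x x₀ := hpow m x x₀
      _ ≤ c ^ m * (2 * R + 1) :=
          mul_le_mul_of_nonneg_left hd (pow_nonneg hc0 m)
      _ ≤ r / 4 / (2 * R + 1) * (2 * R + 1) := by
          exact mul_le_mul_of_nonneg_right hm.le h2R.le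
      _ = r / 4 := by field_simp
  -- pick the translation
  obtain ⟨v, hv⟩ := (Metric.dense_iff.1 hdense) (q - h x₀) (r / 4) (by positivity)
  obtain ⟨hvball, hvG⟩ := hv
  set T : EuclideanSpace ℝ (Fin n) ≃ᵃ[ℝ] EuclideanSpace ℝ (Fin n) :=
    AffineEquiv.constVAdd ℝ (EuclideanSpace ℝ (Fin n)) v with hT
  set g : EuclideanSpace ℝ (Fin n) ≃ᵃ[ℝ] EuclideanSpace ℝ (Fin n) := T * h with hg
  have hgG : g ∈ G := mul_mem hvG hhG
  have hgapp : ∀ x, g x = v + h x := by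
    intro x
    show T (h x) = v + h x
    simp [hT, AffineEquiv.constVAdd_apply]
  -- the image of P lies in the closed ball of radius r/2
  have himg : g '' P ⊆ Metric.closedBall q (r / 2) := by
    rintro _ ⟨x, hx, rfl⟩
    rw [Metric.mem_closedBall, hgapp x]
    have h1 : dist (v + h x) (v + h x₀) = dist (h x) (h x₀) := dist_add_left _ _ _
    have h2 : dist (v + h x₀) q = dist v (q - h x₀) := by
      rw [dist_eq_norm, dist_eq_norm]
      congr 1
      abel
    have h3 : dist v (q - h x₀) < r / 4 := by
      simpa [dist_comm] using Metric.mem_ball.1 hvball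
    calc dist (v + h x) q ≤ dist (v + h x) (v + h x₀) + dist (v + h x₀) q :=
          dist_triangle _ _ _
      _ ≤ r / 4 + r / 4 := by
          rw [h1, h2]; exact add_le_add (hsmall x hx) h3.le
      _ = r / 2 := by ring
  -- measure comparison
  have hmeas : volume (g '' P) < volume Q := by
    have hb1 : volume (g '' P) ≤ volume (Metric.closedBall q (r / 2)) := measure_mono himg
    have hb2 : volume (Metric.closedBall q (r / 2)) = volume (Metric.ball q (r / 2)) :=
      Measure.addHaar_closedBall_eq_addHaar_ball _ _ _
    have hb3 : volume (Metric.ball q (r / 2)) < volume (Metric.ball q r) := by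
      rw [Measure.addHaar_ball volume q (by positivity : (0:ℝ) ≤ r / 2),
        Measure.addHaar_ball volume q hr.le]
      have hpos : (0 : ENNReal) < volume (Metric.ball (0 : EuclideanSpace ℝ (Fin n)) 1) :=
        Metric.measure_ball_pos _ _ one_pos
      have hfin : volume (Metric.ball (0 : EuclideanSpace ℝ (Fin n)) 1) ≠ ⊤ :=
        measure_ball_lt_top.ne
      have hlt : (r / 2) ^ Module.finrank ℝ (EuclideanSpace ℝ (Fin n))
          < r ^ Module.finrank ℝ (EuclideanSpace ℝ (Fin n)) := by
        apply pow_lt_pow_left₀ (by linarith) (by positivity)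
        rw [finrank_euclideanSpace_fin]; omega
      exact ENNReal.mul_lt_mul_left hpos.ne' hfin
        ((ENNReal.ofReal_lt_ofReal_iff (by positivity)).2 hlt)
    have hb4 : volume (Metric.ball q r) ≤ volume Q := measure_mono hballQ
    exact lt_of_le_of_lt (hb1.trans_eq hb2) (lt_of_lt_of_le hb3 hb4)
  -- assemble with k = 1
  refine ⟨1, fun _ => P, fun _ => g, fun _ => hgG, fun _ => hP, ?_, ?_, ?_, ?_, ?_⟩
  · exact Set.iUnion_const P
  · intro i j hij; exact absurd (Subsingleton.elim i j) hij
  · intro i; exact himg.trans ((Metric.closedBall_subset_ball (by linarith)).trans hballQ)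
  · intro i j hij; exact absurd (Subsingleton.elim i j) hij
  · rw [Set.iUnion_const]; exact hmeas
end

section
/- If A is a torsion-free abelian group, then for every j ≥ 0 the j-th exterior power Λʲ_ℤ A of A as a ℤ-module is also torsion-free. -/
open ExteriorAlgebra

/-- The `ℤ`-alternating `ℚ`-valued determinant form built from a family of
`ℚ`-valued coordinates. -/
private noncomputable def detForm {A : Type} [AddCommGroup A] (j : ℕ)
    (L : A →ₗ[ℤ] (Fin j → ℚ)) : A [⋀^Fin j]→ₗ[ℤ] ℚ where
  toMultilinearMap :=
    ((Matrix.detRowAlternating (n := Fin j) (R := ℚ)).toMultilinearMap.restrictScalars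
      ℤ).compLinearMap (fun _ => L)
  map_eq_zero_of_eq' := fun v i k h hik =>
    Matrix.detRowAlternating.map_eq_zero_of_eq (fun l => L (v l)) (by simp only [h]) hik

private lemma detForm_apply {A : Type} [AddCommGroup A] (j : ℕ)
    (L : A →ₗ[ℤ] (Fin j → ℚ)) (v : Fin j → A) :
    detForm j L v = Matrix.det (Matrix.of fun l k => L (v l) k) := rfl

/-- Every wedge of elements of the span of a family lies in the span of the ordered wedges of
the family. -/
private lemma ιMulti_mem_span_family {A : Type} [AddCommGroup A]
    (j N : ℕ) (w : Fin N → A) (v : Fin j → A)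
    (hv : ∀ i, v i ∈ Submodule.span ℤ (Set.range w)) :
    ιMulti ℤ j v ∈ Submodule.span ℤ (Set.range (ιMulti_family ℤ j w)) := by
  have hc : ∀ i, ∃ c : Fin N → ℤ, ∑ k, c k • w k = v i := fun i =>
    (Submodule.mem_span_range_iff_exists_fun ℤ).1 (hv i)
  choose c hc using hc
  have hv' : v = fun i => ∑ k, c i k • w k := by funext i; rw [hc i]
  rw [hv',
    show ((ιMulti ℤ j) fun i => ∑ k, c i k • w k)
        = ∑ r : Fin j → Fin N, (ιMulti ℤ j) fun i => c i (r i) • w (r i) from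
      (ιMulti ℤ j).toMultilinearMap.map_sum fun i k => c i k • w k]
  refine Submodule.sum_mem _ fun r _ => ?_
  rw [show ((ιMulti ℤ j) fun i => c i (r i) • w (r i))
      = (∏ i, c i (r i)) • (ιMulti ℤ j) fun i => w (r i) from
    (ιMulti ℤ j).toMultilinearMap.map_smul_univ _ _]
  refine Submodule.smul_mem _ _ ?_
  by_cases hr : Function.Injective r
  · have hcard : (Finset.image r Finset.univ).card = j := by
      rw [Finset.card_image_of_injective _ hr, Finset.card_univ, Fintype.card_fin]
    set e := Finset.orderIsoOfFin _ hcard with he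
    have hmem : ∀ k, r k ∈ Finset.image r Finset.univ := fun k =>
      Finset.mem_image_of_mem _ (Finset.mem_univ k)
    have hσinj : Function.Injective fun k => e.symm ⟨r k, hmem k⟩ := by
      intro a b hab
      apply hr
      have := congrArg (fun t => (e t : Fin N)) hab
      simpa using this
    let σ : Equiv.Perm (Fin j) :=
      Equiv.ofBijective _ (Finite.injective_iff_bijective.1 hσinj)
    have hwr : (fun i => w (r i)) = (fun i => w (e i)) ∘ σ := by
      funext k
      show w (r k) = w (e (e.symm ⟨r k, hmem k⟩))
      rw [e.apply_symm_apply]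
    rw [hwr, AlternatingMap.map_perm, Units.smul_def]
    exact Submodule.smul_mem _ _
      (Submodule.subset_span ⟨⟨Finset.image r Finset.univ, hcard⟩, rfl⟩)
  · obtain ⟨a, b, hab, hne⟩ : ∃ a b, r a = r b ∧ a ≠ b := by
      simp only [Function.Injective, not_forall] at hr
      obtain ⟨a, b, h1, h2⟩ := hr
      exact ⟨a, b, h1, h2⟩
    rw [AlternatingMap.map_eq_zero_of_eq _ _ (by rw [hab]) hne]
    exact Submodule.zero_mem _

/-- The determinant functional evaluates to a Kronecker delta on ordered basis wedges. -/
private lemma detForm_delta (A : Type) [AddCommGroup A] (j N : ℕ) (P : Submodule ℤ A)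
    (b : Module.Basis (Fin N) ℤ P) (w : Fin N → A) (hw : w = fun i => ((b i : P) : A))
    (ℓ : Fin N → (A →ₗ[ℤ] ℚ)) (hℓ : ∀ i (p : P), ℓ i (P.subtype p) = ((b.coord i) p : ℚ))
    (s₀ s : {s : Finset (Fin N) // s.card = j}) :
    detForm j (LinearMap.pi fun k => ℓ (s₀.1.orderIsoOfFin s₀.2 k))
      (fun i => w (s.1.orderIsoOfFin s.2 i)) = if s = s₀ then 1 else 0 := by
  rw [detForm_apply]
  have hentry : ∀ l k, (LinearMap.pi fun k => ℓ (s₀.1.orderIsoOfFin s₀.2 k))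
      (w (s.1.orderIsoOfFin s.2 l)) k
      = if (s.1.orderIsoOfFin s.2 l : Fin N) = (s₀.1.orderIsoOfFin s₀.2 k : Fin N)
        then 1 else 0 := by
    intro l k
    rw [LinearMap.pi_apply, hw]
    have := hℓ (s₀.1.orderIsoOfFin s₀.2 k) (b (s.1.orderIsoOfFin s.2 l))
    rw [Submodule.subtype_apply] at this
    rw [this, Module.Basis.coord_apply, Module.Basis.repr_self, Finsupp.single_apply]
    split <;> simp_all
  split
  · rename_i h
    subst h
    have heq : (Matrix.of fun l k => (LinearMap.pi fun k => ℓ (s.1.orderIsoOfFin s.2 k))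
        (w (s.1.orderIsoOfFin s.2 l)) k) = (1 : Matrix (Fin j) (Fin j) ℚ) := by
      ext l k
      rw [Matrix.of_apply, hentry l k, Matrix.one_apply]
      congr 1
      simp only [eq_iff_iff]
      constructor
      · intro h
        exact (s.1.orderIsoOfFin s.2).injective (Subtype.ext h)
      · rintro rfl; rfl
    rw [heq, Matrix.det_one]
  · rename_i hne
    obtain ⟨a, ha₀, has⟩ : ∃ a, a ∈ s₀.1 ∧ a ∉ s.1 := by
      by_contra h
      push_neg at h
      exact hne (Subtype.ext ((Finset.eq_of_subset_of_card_le h (s.2.trans s₀.2.symm).le).symm))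
    refine Matrix.det_eq_zero_of_column_eq_zero ((s₀.1.orderIsoOfFin s₀.2).symm ⟨a, ha₀⟩) ?_
    intro l
    rw [Matrix.of_apply, hentry]
    rw [OrderIso.apply_symm_apply]
    have hne' : (s.1.orderIsoOfFin s.2 l : Fin N) ≠ a := fun h =>
      has (h ▸ (s.1.orderIsoOfFin s.2 l).2)
    simp only [Finset.coe_orderIsoOfFin_apply] at hne' ⊢
    simp [hne']

/-- If `A` is a torsion-free abelian group, then for every `j ≥ 0` the `j`-th exterior power
`Λʲ_ℤ A` of `A` as a `ℤ`-module is also torsion-free. -/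
theorem exteriorPower_torsionFree (A : Type) [AddCommGroup A]
    (hA : ∀ (m : ℤ) (x : A), m ≠ 0 → m • x = 0 → x = 0) (j : ℕ) :
    ∀ (m : ℤ) (x : ⋀[ℤ]^j A), m ≠ 0 → m • x = 0 → x = 0 := by
  intro m x hm hmx
  -- write `x` as a finite `ℤ`-combination of wedges
  have hx0 : (x : ExteriorAlgebra ℤ A) ∈ Submodule.span ℤ (Set.range (ιMulti ℤ j)) := by
    rw [ιMulti_span_fixedDegree]; exact x.2
  obtain ⟨c, hc⟩ := Finsupp.mem_span_range_iff_exists_finsupp.1 hx0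
  -- the finitely generated (hence free) submodule generated by all the involved vectors
  set P : Submodule ℤ A := Submodule.span ℤ (⋃ f ∈ c.support, Set.range f) with hP
  haveI : Module.Finite ℤ P := Module.Finite.span_of_finite ℤ
    (Set.Finite.biUnion c.support.finite_toSet fun f _ => Set.finite_range f)
  haveI : NoZeroSMulDivisors ℤ A :=
    ⟨fun {m' a} h => by
      by_cases hm' : m' = 0
      · exact Or.inl hm'
      · exact Or.inr (hA m' a hm' h)⟩
  haveI : Module.Free ℤ P := Module.free_of_finite_type_torsion_free'
  -- a basis of `P`, indexed by `Fin N`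
  set N : ℕ := Fintype.card (Module.Free.ChooseBasisIndex ℤ P) with hN
  set b : Module.Basis (Fin N) ℤ P :=
    (Module.Free.chooseBasis ℤ P).reindex (Fintype.equivFin _) with hb
  set w : Fin N → A := fun i => ((b i : P) : A) with hw
  have hspanw : Submodule.span ℤ (Set.range w) = P := by
    have : Set.range w = P.subtype '' Set.range b := by
      rw [← Set.range_comp]; rfl
    rw [this, Submodule.span_image, b.span_eq, Submodule.map_subtype_top]
  -- `x` lies in the span of the ordered basis wedges
  have hxspan : (x : ExteriorAlgebra ℤ A) ∈
      Submodule.span ℤ (Set.range (ιMulti_family ℤ j w)) := by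
    rw [← hc]
    refine Submodule.finsuppSum_mem ℤ _ c _ fun f hf => ?_
    refine Submodule.smul_mem _ _ (ιMulti_mem_span_family j N w f fun i => ?_)
    rw [hspanw, hP]
    exact Submodule.subset_span
      (Set.mem_biUnion (Finsupp.mem_support_iff.2 hf) (Set.mem_range_self i))
  obtain ⟨d, hd⟩ := (Submodule.mem_span_range_iff_exists_fun ℤ).1 hxspan
  -- `ℚ`-valued extensions of the coordinate functionals of the basis, by injectivity of `ℚ`
  haveI : Module.Injective ℤ ℚ := Module.Baer.injective (Module.Baer.of_divisible ℚ)
  have hext : ∀ i : Fin N, ∃ ℓ : A →ₗ[ℤ] ℚ, ∀ p : P,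
      ℓ (P.subtype p) = ((b.coord i) p : ℚ) := by
    intro i
    obtain ⟨ℓ, hℓ⟩ := Module.Injective.out (R := ℤ) (Q := ℚ) P.subtype
      (Submodule.injective_subtype P) ((Algebra.linearMap ℤ ℚ) ∘ₗ (b.coord i))
    exact ⟨ℓ, fun p => by simpa using hℓ p⟩
  choose ℓ hℓ using hext
  -- the delta functionals
  set ψ : {s : Finset (Fin N) // s.card = j} → (A [⋀^Fin j]→ₗ[ℤ] ℚ) := fun s₀ =>
    detForm j (LinearMap.pi fun k => ℓ (s₀.1.orderIsoOfFin s₀.2 k)) with hψdef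
  have hψ : ∀ s₀ s, ψ s₀ (fun i => w (s.1.orderIsoOfFin s.2 i)) = if s = s₀ then 1 else 0 :=
    fun s₀ s => detForm_delta A j N P b w hw ℓ hℓ s₀ s
  -- extract coefficients and conclude
  have hcoe : m • (x : ExteriorAlgebra ℤ A) = 0 := by
    have := congrArg (Subtype.val) hmx
    simpa using this
  have hzero : ∀ s₀, d s₀ = 0 := by
    intro s₀
    set Ψ : ExteriorAlgebra ℤ A →ₗ[ℤ] ℚ :=
      liftAlternating (Function.update (fun i => (0 : A [⋀^Fin i]→ₗ[ℤ] ℚ)) j (ψ s₀)) with hΨ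
    have hΨι : ∀ v : Fin j → A, Ψ (ιMulti ℤ j v) = ψ s₀ v := by
      intro v
      rw [hΨ, liftAlternating_apply_ιMulti, Function.update_self]
    have hval : Ψ (x : ExteriorAlgebra ℤ A) = (d s₀ : ℚ) := by
      rw [← hd, map_sum]
      have : ∀ s, Ψ (d s • ιMulti_family ℤ j w s) = if s = s₀ then (d s : ℚ) else 0 := by
        intro s
        rw [map_zsmul, hΨι, show (ψ s₀) (w ∘ ⇑(Set.powersetCard.ofFinEmbEquiv.symm s)) = if s = s₀ then 1 else 0 from hψ s₀ s]
        split <;> simp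
      rw [Finset.sum_congr rfl fun s _ => this s]
      simp
    have h0 : Ψ (m • (x : ExteriorAlgebra ℤ A)) = 0 := by rw [hcoe, map_zero]
    rw [map_zsmul, hval] at h0
    have : (d s₀ : ℚ) = 0 := by
      rcases smul_eq_zero.mp h0 with h | h
      · exact absurd h hm
      · exact h
    exact_mod_cast this
  have : (x : ExteriorAlgebra ℤ A) = 0 := by
    rw [← hd]
    simp [hzero]
  exact Subtype.ext this
end
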